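/- Let p ≥ 1 be an integer and let h > 0 be such that 1/h is a positive integer. Define u : [0,1] → ℝ by u(x) = (1 − x/h)^p for x ∈ [0,h) and u(x) = 0 for x ∈ [h,1]. Then u ∈ S_{p,h}(0,1), u is not identically zero, and ∫_0^1 u′(x)² dx = ( (2p+1) · p² / ( (2p−1) · h² ) ) · ∫_0^1 u(x)² dx; equivalently |u|_{H¹(0,1)} / ‖u‖_{L²(0,1)} = √((2p+1)/(2p−1)) · p · h^{−1}. (Hence no inverse inequality with a constant independent of p can hold on all of S_{p,h}(0,1).) -/

import Mathlib

open MeasureTheory Set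

/-- The `L²(a,b)` norm of a function. -/
noncomputable def L2 (a b : ℝ) (v : ℝ → ℝ) : ℝ :=
  Real.sqrt (∫ x in Set.Ioo a b, v x ^ 2)

/-- `u` belongs to the spline space `S_{p,h}(a,b)` of maximum smoothness
(`u` is `(p-1)`-times continuously differentiable on `[a,b]` and coincides with a
polynomial of degree at most `p` on each of the `n = (b-a)/h` subintervals). -/
def IsSplineOn (p n : ℕ) (h a b : ℝ) (u : ℝ → ℝ) : Prop :=
  ContDiffOn ℝ (p - 1 : ℕ) u (Set.Icc a b) ∧
  ∀ j < n, ∃ P : Polynomial ℝ, P.natDegree ≤ p ∧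
    ∀ x ∈ Set.Icc (a + j * h) (a + (j + 1) * h), u x = P.eval x

/-- `u ∈ H¹(a,b)` with weak derivative `g`: `u` is absolutely continuous on `[a,b]`
(an indefinite integral of the locally integrable `g`) and `g` is square-integrable. -/
def IsH1On (a b : ℝ) (u g : ℝ → ℝ) : Prop :=
  IntervalIntegrable g volume a b ∧
  (∀ x ∈ Set.Icc a b, u x = u a + ∫ t in a..x, g t) ∧
  IntegrableOn (fun x => g x ^ 2) (Set.Ioo a b)

noncomputable def gfun (h : ℝ) (k : ℕ) (x : ℝ) : ℝ := if x < h then (1 - x / h) ^ k else 0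

lemma gfun_eq_max {h : ℝ} (hh : 0 < h) {k : ℕ} (hk : 1 ≤ k) :
    gfun h k = fun x => (max (1 - x / h) 0) ^ k := by
  funext x
  by_cases hx : x < h
  · have h1 : (0:ℝ) ≤ 1 - x / h := by
      rw [sub_nonneg]
      exact ((div_lt_one hh).mpr hx).le
    simp [gfun, hx, max_eq_left h1]
  · have h1 : 1 - x / h ≤ 0 := by
      rw [sub_nonpos]
      exact (one_le_div hh).mpr (not_lt.mp hx)
    simp [gfun, hx, max_eq_right h1, zero_pow (by omega : k ≠ 0)]

lemma gfun_cont {h : ℝ} (hh : 0 < h) {k : ℕ} (hk : 1 ≤ k) : Continuous (gfun h k) := by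
  rw [gfun_eq_max hh hk]
  exact ((continuous_const.sub (continuous_id.div_const h)).max continuous_const).pow k

lemma gfun_abs_le {h : ℝ} (hh : 0 < h) (k : ℕ) (x : ℝ) :
    |gfun h k x| ≤ (|x - h| / h) ^ k := by
  by_cases hx : x < h
  · have : 1 - x / h = |x - h| / h := by
      rw [abs_of_neg (by linarith)]
      field_simp
      ring
    simp [gfun, if_pos hx, this, abs_pow, abs_abs, abs_div, abs_of_pos hh]
  · simp only [gfun, if_neg hx, abs_zero]
    positivity

lemma gfun_hasDerivAt {h : ℝ} (hh : 0 < h) (k : ℕ) (x : ℝ) :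
    HasDerivAt (gfun h (k + 2)) ((-(k + 2 : ℝ) / h) * gfun h (k + 1) x) x := by
  rcases lt_trichotomy x h with hx | hx | hx
  · have hs : HasDerivAt (fun y : ℝ => (1 - y / h) ^ (k + 2))
        ((k + 2 : ℕ) * (1 - x / h) ^ (k + 1) * (0 - 1 / h)) x := by
      have : HasDerivAt (fun y : ℝ => 1 - y / h) (0 - 1 / h) x :=
        (hasDerivAt_const x 1).sub ((hasDerivAt_id x).div_const h)
      simpa using this.fun_pow (k + 2)
    have hev : (fun y : ℝ => (1 - y / h) ^ (k + 2)) =ᶠ[nhds x] gfun h (k + 2) := by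
      filter_upwards [IsOpen.mem_nhds isOpen_Iio hx] with y hy
      simp [gfun, Set.mem_Iio.mp hy]
    have := hs.congr_of_eventuallyEq hev.symm
    refine this.congr_deriv ?_
    simp [gfun, hx]
    push_cast
    ring
  · subst hx
    have h0 : gfun x (k + 1) x = 0 := by simp [gfun]
    rw [h0, mul_zero, hasDerivAt_iff_tendsto_slope]
    have hb : ∀ᶠ y in nhdsWithin x {x}ᶜ,
        ‖slope (gfun x (k + 2)) x y‖ ≤ |y - x| ^ (k + 1) / x ^ (k + 2) := by
      filter_upwards [self_mem_nhdsWithin] with y hy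
      have hyx : y ≠ x := hy
      have habs : (0:ℝ) < |y - x| := abs_pos.mpr (sub_ne_zero.mpr hyx)
      rw [slope_def_field, div_eq_inv_mul]
      have hgx : gfun x (k + 2) x = 0 := by simp [gfun]
      rw [hgx, sub_zero]
      rw [norm_mul, norm_inv, Real.norm_eq_abs, Real.norm_eq_abs]
      rw [inv_mul_le_iff₀ habs]
      calc |gfun x (k + 2) y| ≤ (|y - x| / x) ^ (k + 2) := gfun_abs_le hh _ _
        _ = |y - x| ^ (k + 1) / x ^ (k + 2) * |y - x| := by
            rw [div_pow, pow_succ]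
            ring
        _ = |y - x| * (|y - x| ^ (k + 1) / x ^ (k + 2)) := mul_comm _ _
    refine squeeze_zero_norm' hb ?_
    have hc : Continuous (fun y : ℝ => |y - x| ^ (k + 1) / x ^ (k + 2)) := by
      exact ((continuous_abs.comp (continuous_id.sub continuous_const)).pow _).div_const _
    have := (hc.tendsto x).mono_left (nhdsWithin_le_nhds (s := {x}ᶜ))
    simpa [zero_pow (by omega : k + 1 ≠ 0)] using this
  · have hev : (fun _ : ℝ => (0:ℝ)) =ᶠ[nhds x] gfun h (k + 2) := by
      filter_upwards [IsOpen.mem_nhds isOpen_Ioi hx] with y hy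
      simp [gfun, not_lt.mpr (le_of_lt (Set.mem_Ioi.mp hy))]
    have := (hasDerivAt_const x (0:ℝ)).congr_of_eventuallyEq hev.symm
    refine this.congr_deriv ?_
    simp [gfun, not_lt.mpr (le_of_lt hx)]

lemma gfun_deriv {h : ℝ} (hh : 0 < h) (k : ℕ) :
    deriv (gfun h (k + 2)) = fun x => (-(k + 2 : ℝ) / h) * gfun h (k + 1) x := by
  funext x
  exact (gfun_hasDerivAt hh k x).deriv

lemma gfun_contDiff {h : ℝ} (hh : 0 < h) :
    ∀ (m k : ℕ), m < k → ContDiff ℝ (m : ℕ∞) (gfun h k) := by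
  intro m
  induction m with
  | zero =>
    intro k hk
    exact contDiff_zero.mpr (gfun_cont hh hk)
  | succ m ih =>
    intro k hk
    obtain ⟨j, rfl⟩ : ∃ j, k = j + 2 := ⟨k - 2, by omega⟩
    have e : ((((m + 1 : ℕ) : ℕ∞)) : WithTop ℕ∞) = (((m : ℕ) : ℕ∞) : WithTop ℕ∞) + 1 := by
      push_cast; rfl
    rw [e, contDiff_succ_iff_deriv]
    refine ⟨fun x => (gfun_hasDerivAt hh j x).differentiableAt, by simp, ?_⟩
    rw [gfun_deriv hh j]
    exact contDiff_const.mul (ih (j + 1) (by omega))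

lemma integral_pow_piece {h : ℝ} (hh : 0 < h) (k : ℕ) :
    ∫ x in Set.Ioo (0:ℝ) h, (1 - x / h) ^ k = h / (k + 1) := by
  have key : ∫ x in (0:ℝ)..h, (1 - x / h) ^ k = h / (k + 1) := by
    have hder : ∀ x ∈ Set.uIcc (0:ℝ) h,
        HasDerivAt (fun y : ℝ => -h / (k + 1) * (1 - y / h) ^ (k + 1))
          ((1 - x / h) ^ k) x := by
      intro x _
      have h1 : HasDerivAt (fun y : ℝ => 1 - y / h) (0 - 1 / h) x :=
        (hasDerivAt_const x 1).sub ((hasDerivAt_id x).div_const h)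
      have h2 := (h1.fun_pow (k + 1)).const_mul (-h / (k + 1))
      refine h2.congr_deriv ?_
      rw [Nat.add_sub_cancel]
      push_cast
      have : ((k:ℝ) + 1) ≠ 0 := by positivity
      field_simp
      ring
    have hcont : ContinuousOn (fun x : ℝ => (1 - x / h) ^ k) (Set.uIcc 0 h) :=
      ((continuous_const.sub (continuous_id.div_const h)).pow k).continuousOn
    rw [intervalIntegral.integral_eq_sub_of_hasDerivAt hder
      (hcont.intervalIntegrable)]
    simp [div_self hh.ne']
    ring
  rw [← key, intervalIntegral.integral_of_le hh.le,
    ← MeasureTheory.integral_Ioc_eq_integral_Ioo]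

lemma integral_gfun {h : ℝ} (hh : 0 < h) (hle : h ≤ 1) (k : ℕ) :
    ∫ x in Set.Ioo (0:ℝ) 1, gfun h k x = h / (k + 1) := by
  have : ∀ x, gfun h k x = (Set.Iio h).indicator (fun x => (1 - x / h) ^ k) x := by
    intro x
    simp [gfun, Set.indicator_apply, Set.mem_Iio]
  rw [show (fun x => gfun h k x) = _ from funext this]
  rw [setIntegral_indicator measurableSet_Iio]
  have : Set.Ioo (0:ℝ) 1 ∩ Set.Iio h = Set.Ioo 0 h := by
    ext x
    simp only [Set.mem_inter_iff, Set.mem_Ioo, Set.mem_Iio]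
    constructor
    · rintro ⟨⟨h1, _⟩, h3⟩; exact ⟨h1, h3⟩
    · rintro ⟨h1, h2⟩; exact ⟨⟨h1, lt_of_lt_of_le h2 hle⟩, h2⟩
  rw [this, integral_pow_piece hh]


/-- Remark 2 of the paper: the counterexample showing that no
`p`-robust inverse inequality can hold on all of `S_{p,h}(0,1)`. -/
theorem counterexample_inverse_inequality (p n : ℕ) (h : ℝ)
    (hp : 1 ≤ p) (hh : 0 < h) (hn : 0 < n) (hgrid : (1 : ℝ) = n * h) :
    IsSplineOn p n h 0 1 (fun x => if x < h then (1 - x / h) ^ p else 0) ∧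
    (∃ x ∈ Set.Icc (0 : ℝ) 1, (if x < h then (1 - x / h) ^ p else (0 : ℝ)) ≠ 0) ∧
    (∫ x in Set.Ioo (0 : ℝ) 1,
        deriv (fun y => if y < h then (1 - y / h) ^ p else 0) x ^ 2) =
      ((2 * (p : ℝ) + 1) * (p : ℝ) ^ 2 / ((2 * (p : ℝ) - 1) * h ^ 2)) *
        ∫ x in Set.Ioo (0 : ℝ) 1, (if x < h then (1 - x / h) ^ p else (0 : ℝ)) ^ 2 := by
  have hle : h ≤ 1 := by
    have : (1:ℝ) ≤ n := by exact_mod_cast hn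
    nlinarith
  have hu : (fun x => if x < h then (1 - x / h) ^ p else (0:ℝ)) = gfun h p := rfl
  refine ⟨⟨?_, ?_⟩, ⟨0, by simp, by simp [hh]⟩, ?_⟩
  · rw [hu]
    exact (gfun_contDiff hh (p - 1) p (by omega)).contDiffOn
  · intro j hj
    rcases Nat.eq_zero_or_pos j with rfl | hj1
    · refine ⟨(Polynomial.C 1 - Polynomial.C (1/h) * Polynomial.X) ^ p, ?_, ?_⟩
      · calc ((Polynomial.C 1 - Polynomial.C (1/h) * Polynomial.X) ^ p).natDegree
            ≤ p * (Polynomial.C 1 - Polynomial.C (1/h) * Polynomial.X).natDegree :=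
              Polynomial.natDegree_pow_le
          _ ≤ p * 1 := by
              gcongr
              refine le_trans (Polynomial.natDegree_sub_le _ _) ?_
              simp [Polynomial.natDegree_C_mul_le]
              exact le_trans (Polynomial.natDegree_C_mul_le _ _) (by simp)
          _ = p := mul_one p
      · intro x hx
        simp only [Nat.cast_zero, zero_mul, add_zero, zero_add, one_mul] at hx
        simp only [Polynomial.eval_pow, Polynomial.eval_sub, Polynomial.eval_mul,
          Polynomial.eval_C, Polynomial.eval_X, Polynomial.eval_one]
        rcases lt_or_eq_of_le hx.2 with hxh | hxh
        · simp [hxh, one_div, div_eq_inv_mul]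
        · subst hxh
          simp [lt_irrefl, div_eq_inv_mul, inv_mul_cancel₀ hh.ne', div_self hh.ne',
            zero_pow (by omega : p ≠ 0)]
    · refine ⟨0, by simp, ?_⟩
      intro x hx
      have : h ≤ x := by
        have h1 : (1:ℝ) ≤ j := by exact_mod_cast hj1
        have := hx.1
        nlinarith
      simp [not_lt.mpr this]
  · -- integrals
    have hL2 : (∫ x in Set.Ioo (0:ℝ) 1,
        (if x < h then (1 - x / h) ^ p else (0:ℝ)) ^ 2) = h / (2 * p + 1) := by
      have : ∀ x : ℝ, (if x < h then (1 - x / h) ^ p else (0:ℝ)) ^ 2 = gfun h (2 * p) x := by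
        intro x
        by_cases hx : x < h
        · simp [gfun, hx, ← pow_mul, mul_comm]
        · simp [gfun, hx]
      rw [show (fun x : ℝ => (if x < h then (1 - x / h) ^ p else (0:ℝ)) ^ 2) = _ from
        funext this] at *
      rw [integral_gfun hh hle]
      push_cast
      ring_nf
    have hD : (∫ x in Set.Ioo (0:ℝ) 1,
        deriv (fun y => if y < h then (1 - y / h) ^ p else 0) x ^ 2) =
        ((p:ℝ) / h) ^ 2 * (h / (2 * (p:ℝ) - 1)) := by
      have hae : ∀ᵐ x : ℝ, x ∈ Set.Ioo (0:ℝ) 1 →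
          deriv (fun y => if y < h then (1 - y / h) ^ p else 0) x ^ 2 =
          ((p:ℝ) / h) ^ 2 * gfun h (2 * (p - 1)) x := by
        have hne : ∀ᵐ x : ℝ, x ≠ h := by
          rw [MeasureTheory.ae_iff]
          simp only [not_not]
          simpa using measure_singleton h
        filter_upwards [hne] with x hxne _
        rcases lt_or_gt_of_ne hxne with hx | hx
        · have hev : (fun y : ℝ => (1 - y / h) ^ p) =ᶠ[nhds x]
              (fun y => if y < h then (1 - y / h) ^ p else 0) := by
            filter_upwards [IsOpen.mem_nhds isOpen_Iio hx] with y hy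
            simp [Set.mem_Iio.mp hy]
          rw [← hev.deriv_eq]
          have h1 : HasDerivAt (fun y : ℝ => 1 - y / h) (0 - 1 / h) x :=
            (hasDerivAt_const x 1).sub ((hasDerivAt_id x).div_const h)
          rw [(h1.fun_pow p).deriv]
          simp only [gfun, if_pos hx]
          rw [show 2 * (p - 1) = (p - 1) * 2 from by ring, pow_mul]
          ring
        · have hev : (fun _ : ℝ => (0:ℝ)) =ᶠ[nhds x]
              (fun y => if y < h then (1 - y / h) ^ p else 0) := by
            filter_upwards [IsOpen.mem_nhds isOpen_Ioi hx] with y hy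
            simp [not_lt.mpr (le_of_lt (Set.mem_Ioi.mp hy))]
          rw [← hev.deriv_eq, deriv_const]
          simp [gfun, not_lt.mpr (le_of_lt hx)]
      rw [MeasureTheory.setIntegral_congr_ae measurableSet_Ioo hae,
        MeasureTheory.integral_const_mul, integral_gfun hh hle]
      congr 2
      push_cast [Nat.cast_sub hp]
      ring
    rw [hD, hL2]
    have h2p1 : (2 * (p:ℝ) - 1) ≠ 0 := by
      have : (1:ℝ) ≤ p := by exact_mod_cast hp
      nlinarith
    have h2p2 : (2 * (p:ℝ) + 1) ≠ 0 := by positivity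
    field_simp
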